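/- Exact penalty bound: let f, g : S → ℝ with f Lipschitz with constant L on S, and suppose x* minimizes f over the feasible set {x ∈ S : g(x) ≤ K}. If moreover for every x ∈ S there exists a feasible point y with dist(x, y) ≤ (g(x) - K)₊ (a metric regularity assumption with modulus 1), then for any λ ≥ L, x* minimizes the penalized functional f(x) + λ (g(x) - K)₊ over S. -/
import Mathlib


theorem clarke_exact_penalty
    {S : Type*} [MetricSpace S] (f g : S → ℝ) (L : NNReal)
    (hf : LipschitzWith L f) (K : ℝ)
    (xstar : S) (hfeas : g xstar ≤ K)
    (hmin : ∀ x : S, g x ≤ K → f xstar ≤ f x)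
    (hreg : ∀ x : S, ∃ y : S, g y ≤ K ∧ dist x y ≤ max (g x - K) 0)
    (lam : ℝ) (hlam : (L : ℝ) ≤ lam) :
    ∀ x : S, f xstar + lam * max (g xstar - K) 0 ≤ f x + lam * max (g x - K) 0 := by
  intro x
  have hstar : max (g xstar - K) 0 = 0 := max_eq_right (by linarith)
  rw [hstar, mul_zero, add_zero]
  obtain ⟨y, hy, hd⟩ := hreg x
  have h1 : f xstar ≤ f y := hmin y hy
  have h2 : f y - f x ≤ (L : ℝ) * dist x y := by
    have := hf.dist_le_mul y x
    rw [Real.dist_eq] at this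
    have := (abs_le.mp this).2
    rwa [dist_comm] at this
  have hnn : (0:ℝ) ≤ max (g x - K) 0 := le_max_right _ _
  have h3 : (L : ℝ) * dist x y ≤ lam * max (g x - K) 0 :=
    mul_le_mul hlam hd dist_nonneg (le_trans L.coe_nonneg hlam)
  linarith
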